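/- Let V_n = V_n(x,q) be defined by V₀ = V₁ = 1 and V_n = 2·V_{n−1} + (x q^{n−1} − 1)·V_{n−2} for n ≥ 2. Then for every n ≥ 0, V_n = 1 + Σ_{1 ≤ k ≤ n/2} ( x^k q^{k²} · Σ_{m=k}^{n−k} [m choose k]_q · [n−m−1 choose k−1]_q ). -/
import Mathlib


/-- The q-Pochhammer symbol `(q;q)_n` in the two-variable polynomial ring, where the
variable `X 1` plays the role of `q`. -/
noncomputable def qpochM (n : ℕ) : MvPolynomial (Fin 2) ℤ :=
  ∏ i ∈ Finset.range n, (1 - MvPolynomial.X 1 ^ (i + 1))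

namespace Stmt2Aux

noncomputable def qq : MvPolynomial (Fin 2) ℤ := MvPolynomial.X 1
noncomputable def xx : MvPolynomial (Fin 2) ℤ := MvPolynomial.X 0

noncomputable def G : ℕ → ℕ → MvPolynomial (Fin 2) ℤ
  | _, 0 => 1
  | 0, _+1 => 0
  | n+1, k+1 => G n (k+1) + qq ^ (n-k) * G n k

@[simp] lemma G_zero_right (n : ℕ) : G n 0 = 1 := by cases n <;> rfl

@[simp] lemma G_zero_succ (k : ℕ) : G 0 (k+1) = 0 := rfl

lemma pascalA (n k : ℕ) : G (n+1) (k+1) = G n (k+1) + qq ^ (n-k) * G n k := rfl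

lemma G_eq_zero : ∀ n k : ℕ, n < k → G n k = 0 := by
  intro n
  induction n with
  | zero => intro k h; cases k with
    | zero => omega
    | succ k => rfl
  | succ n ih =>
    intro k h
    cases k with
    | zero => omega
    | succ k =>
      rw [pascalA, ih (k+1) (by omega), ih k (by omega), mul_zero, add_zero]

@[simp] lemma G_diag (n : ℕ) : G n n = 1 := by
  induction n with
  | zero => rfl
  | succ n ih =>
    rw [pascalA, G_eq_zero n (n+1) (by omega), Nat.sub_self, pow_zero, one_mul, ih, zero_add]

lemma qpochM_succ (n : ℕ) : qpochM (n+1) = qpochM n * (1 - qq ^ (n+1)) :=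
  Finset.prod_range_succ _ n

lemma qpochM_ne_zero (n : ℕ) : qpochM n ≠ 0 := by
  intro h
  have := congrArg (MvPolynomial.eval (fun _ => (0:ℤ))) h
  simp [qpochM] at this

lemma G_char : ∀ n k : ℕ, k ≤ n → G n k * qpochM k * qpochM (n-k) = qpochM n := by
  intro n
  induction n with
  | zero => intro k h; interval_cases k; simp [qpochM]
  | succ n ih =>
    intro k h
    cases k with
    | zero => simp [qpochM]
    | succ k =>
      rcases Nat.lt_or_ge n (k+1) with hn | hn
      · -- k+1 = n+1
        have hkn : k = n := by omega
        subst hkn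
        simp [qpochM]
      · -- k+1 ≤ n
        have h1 := ih (k+1) hn
        have h2 := ih k (by omega)
        have hk1 : qpochM (k+1) = qpochM k * (1 - qq ^ (k+1)) := qpochM_succ k
        have hN : qpochM (n+1) = qpochM n * (1 - qq ^ (n+1)) := qpochM_succ n
        have hq' : qpochM (n-k) = qpochM (n-(k+1)) * (1 - qq ^ (n-k)) := by
          have h' : n - k = (n-(k+1)) + 1 := by omega
          rw [h', qpochM_succ, ← h']
        have hpow : qq ^ (n-k) * qq ^ (k+1) = qq ^ (n+1) := by
          rw [← pow_add]; congr 1; omega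
        have hnk : n + 1 - (k+1) = n - k := by omega
        rw [pascalA, hnk]
        linear_combination (1-qq^(n-k))*h1 + qq^(n-k)*(1-qq^(k+1))*h2
          + G n (k+1) * qpochM (k+1) * hq' + qq^(n-k) * G n k * qpochM (n-k) * hk1
          - qpochM n * hpow - hN

noncomputable def U (j r : ℕ) : MvPolynomial (Fin 2) ℤ :=
  ∑ i ∈ Finset.range (r+1), G (j+1+i) (j+1) * G (j + (r - i)) j

@[simp] lemma U_zero (j : ℕ) : U j 0 = 1 := by simp [U]

lemma U0row (r : ℕ) : U 0 r = ∑ i ∈ Finset.range (r+1), G (1+i) 1 := by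
  unfold U
  refine Finset.sum_congr rfl fun i hi => ?_
  simp

lemma Dlem (j r : ℕ) : U (j+1) (r+1)
    = U (j+1) r + G (j+3+r) (j+2)
      + ∑ i ∈ Finset.range (r+1), qq^(r+1-i) * (G (j+2+i) (j+2) * G (j+1+(r-i)) j) := by
  rw [show U (j+1) (r+1) = ∑ i ∈ Finset.range (r+1+1), G (j+2+i) (j+2) * G (j+1+(r+1-i)) (j+1) from rfl]
  rw [Finset.sum_range_succ]
  have hlast : G (j+2+(r+1)) (j+2) * G (j+1+(r+1-(r+1))) (j+1) = G (j+3+r) (j+2) := by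
    rw [Nat.sub_self]
    have h1 : j+2+(r+1) = j+3+r := by omega
    have h2 : j+1+0 = j+1 := by omega
    rw [h1, h2, G_diag, mul_one]
  rw [hlast]
  have hsum : ∑ i ∈ Finset.range (r+1), G (j+2+i) (j+2) * G (j+1+(r+1-i)) (j+1)
      = ∑ i ∈ Finset.range (r+1), (G (j+2+i) (j+2) * G (j+1+(r-i)) (j+1)
          + qq^(r+1-i) * (G (j+2+i) (j+2) * G (j+1+(r-i)) j)) := by
    refine Finset.sum_congr rfl fun i hi => ?_
    have hi' : i ≤ r := by simpa [Nat.lt_succ_iff] using hi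
    have h1 : j+1+(r+1-i) = (j+1+(r-i))+1 := by omega
    rw [h1, pascalA]
    have h2 : j+1+(r-i) - j = r+1-i := by omega
    rw [h2]
    ring
  rw [hsum, Finset.sum_add_distrib]
  rw [show U (j+1) r = ∑ i ∈ Finset.range (r+1), G (j+2+i) (j+2) * G (j+1+(r-i)) (j+1) from rfl]
  ring

lemma L1 (j r : ℕ) : U (j+1) (r+2)
    = 2 * U (j+1) (r+1) - U (j+1) r + qq^(r+2) * U j (r+2) := by
  have A1 := Dlem j (r+1)
  have A2 := Dlem j r
  -- manipulate the sum in A1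
  have hS1 : ∑ i ∈ Finset.range (r+2), qq^(r+2-i) * (G (j+2+i) (j+2) * G (j+1+(r+1-i)) j)
      = qq^(r+2) * G (j+(r+2)) j
        + ∑ i ∈ Finset.range (r+1), qq^(r+1-i) * (G (j+3+i) (j+2) * G (j+1+(r-i)) j) := by
    rw [Finset.sum_range_succ']
    have h0 : qq^(r+2-0) * (G (j+2+0) (j+2) * G (j+1+(r+1-0)) j) = qq^(r+2) * G (j+(r+2)) j := by
      have e1 : j+2+0 = j+2 := rfl
      have e2 : j+1+(r+1-0) = j+(r+2) := by omega
      rw [Nat.sub_zero, e1, e2, G_diag, one_mul]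
    rw [h0, add_comm]
    congr 1
    refine Finset.sum_congr rfl fun i hi => ?_
    have hi' : i ≤ r := by simpa [Nat.lt_succ_iff] using hi
    have e1 : r+2-(i+1) = r+1-i := by omega
    have e2 : j+2+(i+1) = j+3+i := by omega
    have e3 : r+1-(i+1) = r-i := by omega
    rw [e1, e2, e3]
  -- difference of sums, termwise Pascal
  have hS2 : ∀ i ∈ Finset.range (r+1),
      qq^(r+1-i) * (G (j+3+i) (j+2) * G (j+1+(r-i)) j)
      = qq^(r+1-i) * (G (j+2+i) (j+2) * G (j+1+(r-i)) j)
        + qq^(r+2) * (G (j+2+i) (j+1) * G (j+1+(r-i)) j) := by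
    intro i hi
    have hi' : i ≤ r := by simpa [Nat.lt_succ_iff] using hi
    have h1 : G (j+3+i) (j+2) = G (j+2+i) (j+2) + qq^(i+1) * G (j+2+i) (j+1) := by
      have e : j+3+i = (j+2+i)+1 := by omega
      rw [e, pascalA]
      have e2 : j+2+i-(j+1) = i+1 := by omega
      rw [e2]
    rw [h1]
    have e3 : qq^(r+1-i) * qq^(i+1) = qq^(r+2) := by
      rw [← pow_add]; congr 1; omega
    calc qq^(r+1-i) * ((G (j+2+i) (j+2) + qq^(i+1) * G (j+2+i) (j+1)) * G (j+1+(r-i)) j)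
        = qq^(r+1-i) * (G (j+2+i) (j+2) * G (j+1+(r-i)) j)
          + qq^(r+1-i) * qq^(i+1) * (G (j+2+i) (j+1) * G (j+1+(r-i)) j) := by ring
      _ = _ := by rw [e3]
  -- expand RHS target: q^(r+2) * U j (r+2)
  have hU : qq^(r+2) * U j (r+2)
      = qq^(r+2) * G (j+(r+2)) j + qq^(r+2) * G (j+3+r) (j+1)
        + ∑ i ∈ Finset.range (r+1), qq^(r+2) * (G (j+2+i) (j+1) * G (j+1+(r-i)) j) := by
    rw [show U j (r+2) = ∑ i ∈ Finset.range (r+2+1), G (j+1+i) (j+1) * G (j+(r+2-i)) j from rfl]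
    rw [Finset.sum_range_succ, Finset.sum_range_succ']
    have h0 : G (j+1+0) (j+1) * G (j+(r+2-0)) j = G (j+(r+2)) j := by
      rw [Nat.sub_zero, show j+1+0 = j+1 from rfl, G_diag, one_mul]
    have hl : G (j+1+(r+2)) (j+1) * G (j+(r+2-(r+2))) j = G (j+3+r) (j+1) := by
      rw [Nat.sub_self]
      have e1 : j+1+(r+2) = j+3+r := by omega
      have e2 : j+0 = j := rfl
      rw [e1, e2, G_diag, mul_one]
    rw [h0, hl]
    have hmid : ∑ i ∈ Finset.range (r+1), G (j+1+(i+1)) (j+1) * G (j+(r+2-(i+1))) j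
        = ∑ i ∈ Finset.range (r+1), G (j+2+i) (j+1) * G (j+1+(r-i)) j := by
      refine Finset.sum_congr rfl fun i hi => ?_
      have hi' : i ≤ r := by simpa [Nat.lt_succ_iff] using hi
      have e1 : j+1+(i+1) = j+2+i := by omega
      have e2 : j+(r+2-(i+1)) = j+1+(r-i) := by omega
      rw [e1, e2]
    rw [hmid, mul_add, mul_add, Finset.mul_sum]
    ring
  -- the first-column difference
  have hG : G (j+4+r) (j+2) = G (j+3+r) (j+2) + qq^(r+2) * G (j+3+r) (j+1) := by
    have e : j+4+r = (j+3+r)+1 := by omega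
    rw [e, pascalA]
    have e2 : j+3+r-(j+1) = r+2 := by omega
    rw [e2]
  rw [Finset.sum_congr rfl hS2, Finset.sum_add_distrib] at hS1
  have e4 : j+3+(r+1) = j+4+r := by omega
  rw [e4] at A1
  rw [A1, hS1, A2, hU, hG]
  ring

lemma L0 (r : ℕ) : U 0 (r+2) = 2 * U 0 (r+1) - U 0 r + qq^(r+2) := by
  rw [U0row, U0row, U0row, Finset.sum_range_succ, Finset.sum_range_succ,
    Finset.sum_range_succ (n := r)]
  have h1 : G (1+(r+2)) 1 = G (1+(r+1)) 1 + qq^(r+2) := by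
    have e : (1:ℕ)+(r+2) = (1+(r+1))+1 := by omega
    rw [e]
    rw [show G (1+(r+1)+1) 1 = G (1+(r+1)) (0+1) + qq^(1+(r+1)-0) * G (1+(r+1)) 0 from pascalA _ 0]
    have e2 : 1+(r+1)-0 = r+2 := by omega
    rw [e2, G_zero_right, mul_one]
  have h2 : G (1+(r+1)) 1 = G (1+r) 1 + qq^(r+1) := by
    have e : (1:ℕ)+(r+1) = (1+r)+1 := by omega
    rw [e]
    rw [show G (1+r+1) 1 = G (1+r) (0+1) + qq^(1+r-0) * G (1+r) 0 from pascalA _ 0]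
    have e2 : 1+r-0 = r+1 := by omega
    rw [e2, G_zero_right, mul_one]
  rw [h1, h2]
  ring

noncomputable def T (n k : ℕ) : MvPolynomial (Fin 2) ℤ :=
  ∑ m ∈ Finset.Icc k (n-k), G m k * G (n-m-1) (k-1)

noncomputable def Tt (n k : ℕ) : MvPolynomial (Fin 2) ℤ :=
  if k = 0 then 1 else T n k

lemma T_zero {n k : ℕ} (hk : 1 ≤ k) (h : n < 2*k) : T n k = 0 := by
  unfold T
  rw [Finset.Icc_eq_empty (by omega : ¬ k ≤ n - k), Finset.sum_empty]

lemma TU (j r : ℕ) : T (2*(j+1)+r) (j+1) = U j r := by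
  unfold T U
  rw [← Finset.Ico_add_one_right_eq_Icc, Finset.sum_Ico_eq_sum_range]
  have hc : 2*(j+1)+r - (j+1) + 1 - (j+1) = r + 1 := by omega
  rw [hc]
  refine Finset.sum_congr rfl fun i hi => ?_
  have hi' : i ≤ r := by simpa [Nat.lt_succ_iff] using hi
  have e1 : 2*(j+1)+r - (j+1+i) - 1 = j + (r-i) := by omega
  have e2 : j+1-1 = j := rfl
  rw [e1, e2]

lemma Usmall (j : ℕ) : U j 1 = G (j+1) j + G (j+2) (j+1) := by
  unfold U
  rw [Finset.sum_range_succ, Finset.sum_range_succ, Finset.sum_range_zero]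
  norm_num

lemma Gsucc2 (m : ℕ) : G (m+2) (m+1) = 1 + qq * G (m+1) m := by
  rw [show G (m+2) (m+1) = G (m+1) (m+1) + qq^(m+1-m) * G (m+1) m from pascalA (m+1) m]
  have e : m+1-m = 1 := by omega
  rw [e, pow_one, G_diag]

lemma Ur1 (j : ℕ) : U (j+1) 1 = 2 + qq * U j 1 := by
  have hA : G (j+2) (j+1) = 1 + qq * G (j+1) j := Gsucc2 j
  have hB : G (j+3) (j+2) = 1 + qq * G (j+2) (j+1) := Gsucc2 (j+1)
  have h1 : U (j+1) 1 = G (j+2) (j+1) + G (j+3) (j+2) := Usmall (j+1)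
  rw [h1, Usmall, hB, hA]
  ring

noncomputable def cc (k : ℕ) : MvPolynomial (Fin 2) ℤ := xx ^ k * qq ^ (k^2)

noncomputable def S (n : ℕ) : MvPolynomial (Fin 2) ℤ :=
  1 + ∑ k ∈ Finset.Icc 1 (n/2), cc k * T n k

lemma Sext {n N : ℕ} (h : n/2 ≤ N) :
    S n = 1 + ∑ k ∈ Finset.Icc 1 N, cc k * T n k := by
  unfold S
  congr 1
  refine Finset.sum_subset (Finset.Icc_subset_Icc_right h) fun k hk hnk => ?_
  simp only [Finset.mem_Icc] at hk hnk
  have hk1 : 1 ≤ k := hk.1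
  have h2k : n < 2*k := by omega
  rw [T_zero hk1 h2k, mul_zero]

lemma term_eq (n k : ℕ) (hk : 1 ≤ k) :
    cc k * T (n+2) k = 2 * (cc k * T (n+1) k) - cc k * T n k
      + xx^k * qq^((k-1)^2 + (n+1)) * Tt n (k-1) := by
  obtain ⟨j, rfl⟩ : ∃ j, k = j + 1 := ⟨k-1, by omega⟩
  have ej : j + 1 - 1 = j := rfl
  rw [ej]
  rcases Nat.lt_or_ge (n+2) (2*(j+1)) with hlt | hge
  · have t2 : T (n+2) (j+1) = 0 := T_zero (by omega) hlt
    have t1 : T (n+1) (j+1) = 0 := T_zero (by omega) (by omega)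
    have t0 : T n (j+1) = 0 := T_zero (by omega) (by omega)
    obtain ⟨j', rfl⟩ : ∃ j', j = j' + 1 := ⟨j-1, by omega⟩
    have tt : Tt n (j'+1) = 0 := by
      unfold Tt
      rw [if_neg (by omega)]
      exact T_zero (by omega) (by omega)
    rw [t2, t1, t0, tt]
    ring
  · set r := n + 2 - 2*(j+1) with hr
    have hn : n + 2 = 2*(j+1) + r := by omega
    have t2 : T (n+2) (j+1) = U j r := by rw [hn]; exact TU j r
    rcases r with _ | r
    · -- r = 0, n = 2j
      have hn' : n = 2*j := by omega
      have t1 : T (n+1) (j+1) = 0 := T_zero (by omega) (by omega)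
      have t0 : T n (j+1) = 0 := T_zero (by omega) (by omega)
      rw [t2, t1, t0, U_zero]
      have hexp : j^2 + (n+1) = (j+1)^2 := by subst hn'; ring
      rcases j with _ | j'
      · unfold Tt
        rw [if_pos rfl, hexp]
        unfold cc
        ring
      · have tt : Tt n (j'+1) = 1 := by
          unfold Tt
          rw [if_neg (by omega)]
          have : n = 2*(j'+1) + 0 := by omega
          rw [this, TU, U_zero]
        rw [tt, hexp]
        unfold cc
        ring
    · rcases r with _ | s
      · -- r = 1, n = 2j+1
        have hn' : n = 2*j+1 := by omega
        have t1 : T (n+1) (j+1) = 1 := by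
          have : n+1 = 2*(j+1) + 0 := by omega
          rw [this, TU, U_zero]
        have t0 : T n (j+1) = 0 := T_zero (by omega) (by omega)
        rw [t2, t1, t0]
        have hexp : j^2 + (n+1) = (j+1)^2 + 1 := by subst hn'; ring
        rcases j with _ | j'
        · have tt : Tt n 0 = 1 := if_pos rfl
          rw [tt, hexp]
          have hU : U 0 1 = 2 + qq := by
            rw [Usmall, Gsucc2 0]
            norm_num
            ring
          rw [hU]
          unfold cc xx qq
          ring
        · have tt : Tt n (j'+1) = U j' 1 := by
            unfold Tt
            rw [if_neg (by omega)]
            have : n = 2*(j'+1) + 1 := by omega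
            rw [this, TU]
          rw [tt, hexp, Ur1]
          unfold cc
          rw [pow_add]
          ring
      · -- r = s+2
        have hn' : n = 2*j + s + 2 := by omega
        have t1 : T (n+1) (j+1) = U j (s+1) := by
          have : n+1 = 2*(j+1) + (s+1) := by omega
          rw [this, TU]
        have t0 : T n (j+1) = U j s := by
          have : n = 2*(j+1) + s := by omega
          rw [this, TU]
        rw [t2, t1, t0]
        have hexp : j^2 + (n+1) = (j+1)^2 + (s+2) := by subst hn'; ring
        rcases j with _ | j'
        · have tt : Tt n 0 = 1 := if_pos rfl
          rw [tt, hexp, L0]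
          unfold cc
          rw [pow_add]
          ring
        · have tt : Tt n (j'+1) = U j' (s+2) := by
            unfold Tt
            rw [if_neg (by omega)]
            have : n = 2*(j'+1) + (s+2) := by omega
            rw [this, TU]
          rw [tt, hexp, L1]
          unfold cc
          rw [pow_add]
          ring

lemma hE (n : ℕ) :
    ∑ k ∈ Finset.Icc 1 (n+2), xx^k * qq^((k-1)^2 + (n+1)) * Tt n (k-1)
      = xx * qq^(n+1) * S n := by
  rw [← Finset.Ico_add_one_right_eq_Icc, Finset.sum_Ico_eq_sum_range]
  have hc : n+2+1-1 = n+2 := by omega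
  rw [hc, Finset.sum_range_succ']
  have h0 : xx^(1+0) * qq^((1+0-1)^2 + (n+1)) * Tt n (1+0-1) = xx * qq^(n+1) := by
    norm_num [Tt]
  rw [h0]
  have hmain : ∑ i ∈ Finset.range (n+1), xx^(1+(i+1)) * qq^((1+(i+1)-1)^2 + (n+1)) * Tt n (1+(i+1)-1)
      = xx * qq^(n+1) * ∑ k ∈ Finset.Icc 1 (n+1), cc k * T n k := by
    rw [← Finset.Ico_add_one_right_eq_Icc, Finset.sum_Ico_eq_sum_range]
    have hc2 : n+1+1-1 = n+1 := by omega
    rw [hc2, Finset.mul_sum]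
    refine Finset.sum_congr rfl fun i hi => ?_
    have e1 : 1+(i+1)-1 = i+1 := by omega
    have e4 : (1:ℕ)+(i+1) = (i+1)+1 := by omega
    have e5 : (1:ℕ)+i = i+1 := by omega
    rw [e1, e4, e5]
    have e2 : Tt n (i+1) = T n (i+1) := if_neg (by omega)
    rw [e2]
    unfold cc
    rw [pow_add, pow_succ]
    ring
  rw [hmain, Sext (show n/2 ≤ n+1 by omega)]
  ring

lemma Srec (n : ℕ) : S (n+2) = 2 * S (n+1) + (xx * qq^(n+1) - 1) * S n := by
  have e2 : S (n+2) = 1 + ∑ k ∈ Finset.Icc 1 (n+2), cc k * T (n+2) k := Sext (by omega)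
  have e1 : S (n+1) = 1 + ∑ k ∈ Finset.Icc 1 (n+2), cc k * T (n+1) k := Sext (by omega)
  have e0 : S n = 1 + ∑ k ∈ Finset.Icc 1 (n+2), cc k * T n k := Sext (by omega)
  have hterm : ∑ k ∈ Finset.Icc 1 (n+2), cc k * T (n+2) k
      = ∑ k ∈ Finset.Icc 1 (n+2), (2 * (cc k * T (n+1) k) - cc k * T n k
          + xx^k * qq^((k-1)^2 + (n+1)) * Tt n (k-1)) := by
    refine Finset.sum_congr rfl fun k hk => ?_
    exact term_eq n k (Finset.mem_Icc.mp hk).1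
  rw [e2, hterm, Finset.sum_add_distrib, Finset.sum_sub_distrib, hE, ← Finset.mul_sum]
  rw [e1, e0]
  have e0' := e0
  rw [Sext (show n/2 ≤ n+2 from by omega)] at *
  ring

lemma S0 : S 0 = 1 := by simp [S]

lemma S1 : S 1 = 1 := by simp [S]

end Stmt2Aux

open Stmt2Aux

/-- With `V₀ = V₁ = 1` and `V_n = 2·V_{n−1} + (x q^{n−1} − 1)·V_{n−2}` for `n ≥ 2`, one
has, for every `n ≥ 0`,
`V_n = 1 + Σ_{1 ≤ k ≤ n/2} x^k q^{k²} Σ_{m=k}^{n−k} [m,k]_q [n−m−1,k−1]_q`,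
where `gauss n k` denotes the Gaussian polynomial `[n,k]_q`, characterized by
`[n,k]_q (q;q)_k (q;q)_{n−k} = (q;q)_n` for `k ≤ n`.  Here `X 0` plays the role of `x`
and `X 1` the role of `q`. -/
theorem stmt2
    (V : ℕ → MvPolynomial (Fin 2) ℤ)
    (hV0 : V 0 = 1) (hV1 : V 1 = 1)
    (hVrec : ∀ n : ℕ, 2 ≤ n →
      V n = 2 * V (n - 1)
        + (MvPolynomial.X (0 : Fin 2) * MvPolynomial.X 1 ^ (n - 1) - 1) * V (n - 2))
    (gauss : ℕ → ℕ → MvPolynomial (Fin 2) ℤ)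
    (hgauss : ∀ n k : ℕ, k ≤ n → gauss n k * qpochM k * qpochM (n - k) = qpochM n) :
    ∀ n : ℕ,
      V n = 1 + ∑ k ∈ Finset.Icc 1 (n / 2),
        MvPolynomial.X (0 : Fin 2) ^ k * MvPolynomial.X 1 ^ (k ^ 2) *
          ∑ m ∈ Finset.Icc k (n - k), gauss m k * gauss (n - m - 1) (k - 1) := by
  have hgG : ∀ a b : ℕ, b ≤ a → gauss a b = G a b := by
    intro a b h
    have h3 : gauss a b * (qpochM b * qpochM (a-b)) = G a b * (qpochM b * qpochM (a-b)) := by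
      rw [← mul_assoc, ← mul_assoc, hgauss a b h, G_char a b h]
    exact mul_right_cancel₀
      (mul_ne_zero (qpochM_ne_zero b) (qpochM_ne_zero (a-b))) h3
  have key : ∀ n, V n = S n := by
    intro n
    induction n using Nat.strong_induction_on with
    | _ n ih =>
      match n, ih with
      | 0, _ => rw [hV0, S0]
      | 1, _ => rw [hV1, S1]
      | (m+2), ih =>
        have h := hVrec (m+2) (by omega)
        rw [show m+2-1 = m+1 from rfl, show m+2-2 = m from rfl] at h
        rw [h, ih (m+1) (by omega), ih m (by omega), Srec]
        rfl
  intro n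
  rw [key n]
  unfold S cc T xx qq
  congr 1
  refine Finset.sum_congr rfl fun k hk => ?_
  simp only [Finset.mem_Icc] at hk
  congr 1
  refine Finset.sum_congr rfl fun m hm => ?_
  simp only [Finset.mem_Icc] at hm
  rw [hgG m k hm.1, hgG (n-m-1) (k-1) (by omega)]
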